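/- With respect to the graded symplectic structure ω = dΘ on M(n|m), the graded Poisson bracket of two matrices equals their graded commutator: {M, M'}_{dΘ} = [M, M']_g, and the Hamiltonian graded vector field of M is D_M = ad M. -/

import Mathlib

noncomputable section

/-- The `ℤ₂`-graded algebra `M(n|m)` of complex `(n+m)×(n+m)` matrices. -/
abbrev GMat (n m : ℕ) := Matrix (Fin (n + m)) (Fin (n + m)) ℂ

/-- The "body" matrix algebra `M_{max n m}(ℂ)`. -/
abbrev BMat (n m : ℕ) := Matrix (Fin (max n m)) (Fin (max n m)) ℂ

namespace GMat

/-- Block degree of an index: `false` for the first (size `n`) block. -/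
def bdeg (n m : ℕ) (i : Fin (n + m)) : Bool := decide (n ≤ i.val)

/-- `M` is homogeneous of degree `ε` (block-diagonal for `ε = false`,
block-off-diagonal for `ε = true`). -/
def IsHomog (n m : ℕ) (ε : Bool) (M : GMat n m) : Prop :=
  ∀ i j, Bool.xor (bdeg n m i) (bdeg n m j) ≠ ε → M i j = 0

/-- The Koszul sign `(-1)^{ab}`. -/
def sgn (a b : Bool) : ℂ := if a && b then -1 else 1

/-- Graded commutator of homogeneous elements of degrees `a`, `b`. -/
def gcomm {n m : ℕ} (a b : Bool) (A B : GMat n m) : GMat n m := A * B - sgn a b • (B * A)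

/-- Graded anticommutator of homogeneous elements of degrees `a`, `b`. -/
def gacomm {n m : ℕ} (a b : Bool) (A B : GMat n m) : GMat n m := A * B + sgn a b • (B * A)

/-- The grading matrix `Γ = diag(1_n, -1_m)`. -/
def Gamma (n m : ℕ) : GMat n m := Matrix.diagonal fun i => if bdeg n m i then -1 else 1

/-- `D` is a graded derivation of `M(n|m)` of degree `ε`. -/
def IsGDer (n m : ℕ) (ε : Bool) (D : GMat n m → GMat n m) : Prop :=
  (∀ A B, D (A + B) = D A + D B) ∧
  (∀ (c : ℂ) A, D (c • A) = c • D A) ∧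
  (∀ (a : Bool) M, IsHomog n m a M → IsHomog n m (Bool.xor a ε) (D M)) ∧
  (∀ (a : Bool) (M M' : GMat n m), IsHomog n m a M →
    D (M * M') = D M * M' + sgn ε a • (M * D M'))

/-- The graded adjoint action `ad E` of a homogeneous matrix `E` of degree `a`:
on homogeneous `M` it is the graded commutator `[E,M]_g`. -/
def gad (n m : ℕ) (a : Bool) (E : GMat n m) : GMat n m → GMat n m :=
  fun M => E * M - (if a then Gamma n m * M * Gamma n m * E else M * E)

/-- The supertrace `str M = Tr M₁ - Tr M₄`. -/
def str (n m : ℕ) (M : GMat n m) : ℂ :=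
  ∑ i, (if bdeg n m i then (-1 : ℂ) else 1) * M i i

end GMat



namespace GMat

/-- The canonical graded 1-form `Θ`, determined by `Θ(ad E) = E`.  A graded
1-form is recorded by its values on the homogeneous graded derivations
`ad E` (`E ∈ sl(n|m)` homogeneous of degree `a`). -/
def Theta1 (n m : ℕ) : Bool → GMat n m → GMat n m := fun _ E => E

/-- The Chevalley–Eilenberg exterior differential of an even graded 1-form
`θ`, evaluated on the homogeneous graded derivations `ad E`, `ad F`
(of degrees `a`, `b`):
`dθ(D₀,D₁) = L_{D₀}(θ(D₁)) - (-1)^{ab} L_{D₁}(θ(D₀)) - θ([D₀,D₁])`. -/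
def dOneEven (n m : ℕ) (θ : Bool → GMat n m → GMat n m) :
    Bool → GMat n m → Bool → GMat n m → GMat n m :=
  fun a E b F =>
    gad n m a E (θ b F) - sgn a b • gad n m b F (θ a E) -
      θ (Bool.xor a b) (gcomm a b E F)

/-- The exterior differential of a homogeneous matrix `M` of degree `c`
(a graded 0-form), evaluated on the graded derivation `ad E` of degree `a`:
`dM(D₀) = (-1)^{|D₀||M|} L_{D₀} M`. -/
def dZero (n m : ℕ) (c : Bool) (M : GMat n m) (a : Bool) (E : GMat n m) :
    GMat n m :=
  sgn a c • gad n m a E M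

/-- The supertrace-free representative of `M`, generating the same graded
derivation: `M - (str M / (n-m))·1 ∈ sl(n|m)`. -/
def slpart (n m : ℕ) (M : GMat n m) : GMat n m :=
  M - ((str n m M) / ((n : ℂ) - (m : ℂ))) • (1 : GMat n m)

end GMat

namespace GMat

variable {n m : ℕ}

lemma conj_homog {c : Bool} {M : GMat n m} (h : IsHomog n m c M) :
    Gamma n m * M * Gamma n m = (if c then (-1:ℂ) else 1) • M := by
  ext i j
  rw [Gamma, Matrix.mul_diagonal, Matrix.diagonal_mul, Matrix.smul_apply]
  by_cases hij : Bool.xor (bdeg n m i) (bdeg n m j) = c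
  · subst hij
    cases hi : bdeg n m i <;> cases hj : bdeg n m j <;> simp [smul_eq_mul] <;> ring
  · rw [h i j hij]; simp

lemma gad_eq_gcomm {a c : Bool} (E : GMat n m) {M : GMat n m} (hM : IsHomog n m c M) :
    gad n m a E M = gcomm a c E M := by
  unfold gad gcomm
  cases a with
  | false => simp [sgn]
  | true =>
    rw [conj_homog hM, Matrix.smul_mul]
    cases c <;> simp [sgn]

lemma dOneEven_theta {a c : Bool} {E N : GMat n m} (hE : IsHomog n m a E)
    (hN : IsHomog n m c N) :
    dOneEven n m (Theta1 n m) a E c N = gcomm a c E N := by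
  unfold dOneEven Theta1
  rw [gad_eq_gcomm E hN, gad_eq_gcomm N hE]
  unfold gcomm
  have hs : sgn c a = sgn a c := by unfold sgn; rw [Bool.and_comm]
  rw [hs]
  rcases h : (a && c) with _ | _ <;> simp [sgn, h, smul_sub] <;> module

lemma str_smul (c : ℂ) (A : GMat n m) : str n m (c • A) = c * str n m A := by
  simp [str, Finset.mul_sum, mul_left_comm]

lemma str_sub (A B : GMat n m) : str n m (A - B) = str n m A - str n m B := by
  simp [str, mul_sub, Finset.sum_sub_distrib]

lemma str_one : str n m (1 : GMat n m) = (n : ℂ) - m := by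
  unfold str bdeg
  simp only [Matrix.one_apply_eq, mul_one, decide_eq_true_eq]
  rw [Fin.sum_univ_eq_sum_range (fun k => if n ≤ k then (-1:ℂ) else 1) (n+m)]
  rw [Finset.range_eq_Ico, ← Finset.sum_Ico_consecutive _ (Nat.zero_le n) (Nat.le_add_right n m)]
  rw [Finset.sum_congr rfl (fun k hk => if_neg (by simp at hk; omega)),
      Finset.sum_congr (g := fun _ => (-1:ℂ)) rfl (fun k hk => if_pos (by simp at hk; omega))]
  simp [Nat.card_Ico, sub_eq_add_neg]

lemma str_homog_true {M : GMat n m} (h : IsHomog n m true M) : str n m M = 0 := by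
  unfold str
  rw [Finset.sum_eq_zero]
  intro i _
  rw [h i i (by simp), mul_zero]

lemma slpart_eq_of_true {M : GMat n m} (h : IsHomog n m true M) : slpart n m M = M := by
  rw [slpart, str_homog_true h]
  simp

lemma slpart_homog {c : Bool} {M : GMat n m} (h : IsHomog n m c M) :
    IsHomog n m c (slpart n m M) := by
  cases c with
  | true => rw [slpart_eq_of_true h]; exact h
  | false =>
    intro i j hij
    have hne : i ≠ j := by rintro rfl; simp at hij
    rw [slpart, Matrix.sub_apply, Matrix.smul_apply, h i j hij,
      Matrix.one_apply_ne hne]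
    simp

lemma str_slpart (hnm : n ≠ m) (M : GMat n m) : str n m (slpart n m M) = 0 := by
  have hcast : (n : ℂ) - m ≠ 0 := by
    intro h
    exact hnm (Nat.cast_inj.mp (sub_eq_zero.mp h : (n:ℂ) = m))
  rw [slpart, str_sub, str_smul, str_one, div_mul_cancel₀ _ hcast, sub_self]

lemma gcomm_slpart_right {c' : Bool} (a : Bool) (E : GMat n m) {M' : GMat n m}
    (h : IsHomog n m c' M') :
    gcomm a c' E (slpart n m M') = gcomm a c' E M' := by
  cases c' with
  | true => rw [slpart_eq_of_true h]
  | false =>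
    have hs : sgn a false = 1 := by simp [sgn]
    unfold gcomm slpart
    rw [hs]
    simp only [one_smul, mul_sub, sub_mul, mul_smul_comm, smul_mul_assoc, mul_one, one_mul]
    module

lemma gcomm_slpart_left {c : Bool} (b : Bool) {M : GMat n m} (F : GMat n m)
    (h : IsHomog n m c M) :
    gcomm c b (slpart n m M) F = gcomm c b M F := by
  cases c with
  | true => rw [slpart_eq_of_true h]
  | false =>
    have hs : sgn false b = 1 := by simp [sgn]
    unfold gcomm slpart
    rw [hs]
    simp only [one_smul, mul_sub, sub_mul, mul_smul_comm, smul_mul_assoc, mul_one, one_mul]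
    module

lemma homog_std (l r : Fin (n + m)) :
    IsHomog n m (Bool.xor (bdeg n m l) (bdeg n m r)) (Matrix.single l r (1:ℂ)) := by
  intro i j hij
  apply Matrix.single_apply_of_ne
  rintro ⟨rfl, rfl⟩
  exact hij rfl

lemma str_std {l r : Fin (n + m)} (h : l ≠ r) :
    str n m (Matrix.single l r (1:ℂ)) = 0 := by
  unfold str
  rw [Finset.sum_eq_zero]
  intro i _
  have hz : Matrix.single l r (1:ℂ) i i = 0 := by
    apply Matrix.single_apply_of_ne
    rintro ⟨rfl, rfl⟩
    exact h rfl
  rw [hz, mul_zero]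

end GMat

/-- `ω = dΘ` is a graded symplectic structure on `M(n|m)`: the Hamiltonian
graded vector field of `M` is `D_M = ad M` (with supertrace-free
representative `slpart M`, uniquely), and the induced graded Poisson bracket
is the graded commutator: `{M, M'}_{dΘ} = [M, M']_g`. -/
theorem dTheta_symplectic_poisson (n m : ℕ) (hnm : n ≠ m) :
    (∀ (c : Bool) (M : GMat n m), GMat.IsHomog n m c M →
      ∀ (a : Bool) (E : GMat n m), GMat.str n m E = 0 → GMat.IsHomog n m a E →
        GMat.dOneEven n m (GMat.Theta1 n m) a E c (GMat.slpart n m M) =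
          GMat.gad n m a E M) ∧
    (∀ (c : Bool) (M : GMat n m), GMat.IsHomog n m c M →
      ∀ N : GMat n m, GMat.str n m N = 0 → GMat.IsHomog n m c N →
        (∀ (a : Bool) (E : GMat n m), GMat.str n m E = 0 → GMat.IsHomog n m a E →
          GMat.dOneEven n m (GMat.Theta1 n m) a E c N = GMat.gad n m a E M) →
        N = GMat.slpart n m M) ∧
    (∀ (c c' : Bool) (M M' : GMat n m), GMat.IsHomog n m c M →
      GMat.IsHomog n m c' M' →
      GMat.dOneEven n m (GMat.Theta1 n m) c (GMat.slpart n m M) c'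
        (GMat.slpart n m M') = GMat.gcomm c c' M M') := by
  have hcast : (n : ℂ) - m ≠ 0 := by
    intro h
    exact hnm (Nat.cast_inj.mp (sub_eq_zero.mp h : (n:ℂ) = m))
  refine ⟨?_, ?_, ?_⟩
  · intro c M hM a E _ hE
    rw [GMat.dOneEven_theta hE (GMat.slpart_homog hM),
        GMat.gcomm_slpart_right a E hM, ← GMat.gad_eq_gcomm E hM]
  · intro c M hM N hstrN hN hcond
    set Q := GMat.slpart n m M with hQdef
    have hQ : GMat.IsHomog n m c Q := GMat.slpart_homog hM
    have key : ∀ l r : Fin (n+m), l ≠ r →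
        GMat.gcomm (Bool.xor (GMat.bdeg n m l) (GMat.bdeg n m r)) c
            (Matrix.single l r (1:ℂ)) N
          = GMat.gcomm (Bool.xor (GMat.bdeg n m l) (GMat.bdeg n m r)) c
            (Matrix.single l r (1:ℂ)) Q := by
      intro l r hlr
      have h1 := hcond _ _ (GMat.str_std hlr) (GMat.homog_std l r)
      rw [GMat.dOneEven_theta (GMat.homog_std l r) hN,
          GMat.gad_eq_gcomm _ hM, ← GMat.gcomm_slpart_right _ _ hM] at h1
      exact h1
    -- off-diagonal entries agree
    have off : ∀ r l : Fin (n+m), r ≠ l → N r l = Q r l := by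
      intro r l hrl
      have h := congrFun (congrFun (key l r (Ne.symm hrl)) l) l
      have e2 : (N * Matrix.single l r (1:ℂ)) l l = 0 := by
        apply Matrix.mul_single_apply_of_ne
        exact Ne.symm hrl
      have e2' : (Q * Matrix.single l r (1:ℂ)) l l = 0 := by
        apply Matrix.mul_single_apply_of_ne
        exact Ne.symm hrl
      simp only [GMat.gcomm, Matrix.sub_apply, Matrix.smul_apply, smul_eq_mul,
        Matrix.single_mul_apply_same, one_mul, e2, e2',
        mul_zero, sub_zero] at h
      exact h
    ext r l
    by_cases hrl : r = l
    · subst hrl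
      cases hc : c with
      | true =>
        rw [hc] at hN hQ
        rw [hN r r (by simp), hQ r r (by simp)]
      | false =>
        rw [hc] at key
        have hv : ∀ i : Fin (n+m), N i i - Q i i = N r r - Q r r := by
          intro i
          by_cases hi : i = r
          · rw [hi]
          · have h := congrFun (congrFun (key i r hi) i) r
            have hs : GMat.sgn (Bool.xor (GMat.bdeg n m i) (GMat.bdeg n m r)) false = 1 := by
              simp [GMat.sgn]
            simp only [GMat.gcomm, hs, one_smul, Matrix.sub_apply,
              Matrix.single_mul_apply_same, one_mul,
              Matrix.mul_single_apply_same, mul_one] at h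
            linear_combination -h
        have hone : ∑ i : Fin (n+m), (if GMat.bdeg n m i then (-1:ℂ) else 1)
            = (n : ℂ) - m := by
          have h1 := GMat.str_one (n := n) (m := m)
          unfold GMat.str at h1
          simpa [Matrix.one_apply_eq] using h1
        have hsum : (N r r - Q r r) * ((n:ℂ) - m) = 0 := by
          have h0 : GMat.str n m (N - Q) = 0 := by
            rw [GMat.str_sub, hstrN, hQdef, GMat.str_slpart hnm, sub_zero]
          rw [← h0]
          unfold GMat.str
          rw [Finset.sum_congr rfl
            (fun i _ => by rw [Matrix.sub_apply, hv i] :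
              ∀ i ∈ Finset.univ, (if GMat.bdeg n m i then (-1:ℂ) else 1) * (N - Q) i i
                = (if GMat.bdeg n m i then (-1:ℂ) else 1) * (N r r - Q r r)),
            ← Finset.sum_mul, hone, mul_comm]
        have := mul_eq_zero.mp hsum
        rcases this with h | h
        · exact sub_eq_zero.mp h
        · exact absurd h hcast
    · exact off r l hrl
  · intro c c' M M' hM hM'
    rw [GMat.dOneEven_theta (GMat.slpart_homog hM) (GMat.slpart_homog hM'),
        GMat.gcomm_slpart_right _ _ hM', GMat.gcomm_slpart_left _ _ hM]

end
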